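/- arXiv:0807.0529 — 7 statements merged into one kernel-verified Lean document; each statement's English description precedes it below -/
import Mathlib

section
/- There exists a real-valued Schwartz function η : ℝ → ℝ such that ∫ η(x) dx = 1 and ∫ xⁿ η(x) dx = 0 for every integer n ≥ 1. That is, the set 𝒜_∞ of Colombeau mollifiers is nonempty. -/
open MeasureTheory Real Complex Filter
open scoped FourierTransform

noncomputable def myBump : ContDiffBump (0 : ℝ) := ⟨1, 2, one_pos, one_lt_two⟩

noncomputable def myPhi : SchwartzMap ℝ ℂ where
  toFun x := (myBump x : ℂ)
  smooth' := Complex.ofRealCLM.contDiff.comp (myBump.contDiff (n := (⊤ : ℕ∞)))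
  decay' := by
    intro k n
    have hsupp : HasCompactSupport (fun x : ℝ => (myBump x : ℂ)) :=
      myBump.hasCompactSupport.comp_left (g := fun r : ℝ => (r : ℂ)) (by simp)
    have h1 : HasCompactSupport (iteratedFDeriv ℝ n (fun x : ℝ => (myBump x : ℂ))) :=
      hsupp.iteratedFDeriv n
    have hcont : Continuous (fun x : ℝ =>
        ‖x‖ ^ k * ‖iteratedFDeriv ℝ n (fun x : ℝ => (myBump x : ℂ)) x‖) := by
      have hb : ContDiff ℝ ((⊤ : ℕ∞) : WithTop ℕ∞) (⇑myBump) := myBump.contDiff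
      have h3 : ContDiff ℝ ((⊤ : ℕ∞) : WithTop ℕ∞) (fun x : ℝ => (myBump x : ℂ)) :=
        Complex.ofRealCLM.contDiff.comp hb
      exact ((continuous_norm.pow k)).mul
        (h3.continuous_iteratedFDeriv (mod_cast le_top)).norm
    have h2 : HasCompactSupport (fun x : ℝ =>
        ‖x‖ ^ k * ‖iteratedFDeriv ℝ n (fun x : ℝ => (myBump x : ℂ)) x‖) :=
      h1.norm.mul_left
    obtain ⟨C, hC⟩ := hcont.bounded_above_of_compact_support h2
    exact ⟨C, fun x => le_trans (le_abs_self _) ((Real.norm_eq_abs _ ▸ hC x))⟩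

noncomputable def myPsi : SchwartzMap ℝ ℂ :=
  (SchwartzMap.fourierTransformCLE ℂ (SchwartzMap ℝ ℂ)).symm myPhi

lemma fourier_myPsi : 𝓕 (⇑myPsi) = ⇑myPhi := by
  have : SchwartzMap.fourierTransformCLE ℂ (SchwartzMap ℝ ℂ) myPsi = myPhi :=
    (SchwartzMap.fourierTransformCLE ℂ (SchwartzMap ℝ ℂ)).apply_symm_apply myPhi
  rw [← this]
  rfl

lemma myPsi_integrable_pow (n : ℕ) :
    Integrable (fun x : ℝ => x ^ n • myPsi x) := by
  refine ((myPsi.integrable_pow_mul volume n).mono'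
    ((continuous_pow n).smul myPsi.continuous).aestronglyMeasurable ?_)
  filter_upwards with x
  simp [norm_smul, abs_pow]

lemma fourier_at_zero (f : ℝ → ℂ) : 𝓕 f 0 = ∫ x : ℝ, f x := by
  simp [Real.fourier_eq]

lemma moment_eq (n : ℕ) :
    iteratedDeriv n (𝓕 (⇑myPsi)) 0
      = (-2 * Real.pi * Complex.I) ^ n * ∫ x : ℝ, (x : ℂ) ^ n * myPsi x := by
  have h := Real.iteratedDeriv_fourier (f := ⇑myPsi) (N := (⊤ : ℕ∞)) (n := n)
    (fun k _ => myPsi_integrable_pow k) le_top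
  rw [h]
  have : (fun x : ℝ => ((-2 * Real.pi * Complex.I * x) ^ n) • myPsi x)
      = fun x : ℝ => (-2 * Real.pi * Complex.I) ^ n * ((x : ℂ) ^ n * myPsi x) := by
    funext x
    rw [mul_pow, smul_eq_mul, mul_assoc]
  rw [this, fourier_at_zero]
  rw [integral_const_mul]

lemma iteratedDeriv_myPhi_zero {n : ℕ} (hn : 1 ≤ n) :
    iteratedDeriv n (⇑myPhi) 0 = 0 := by
  have hev : (⇑myPhi : ℝ → ℂ) =ᶠ[nhds (0 : ℝ)] fun _ => (1 : ℂ) := by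
    filter_upwards [myBump.eventuallyEq_one] with x hx
    show (myBump x : ℂ) = 1
    rw [hx]; simp
  have : iteratedFDeriv ℝ n (⇑myPhi) 0 = iteratedFDeriv ℝ n (fun _ : ℝ => (1 : ℂ)) 0 := by
    rw [← iteratedFDerivWithin_univ, ← iteratedFDerivWithin_univ]
    refine Filter.EventuallyEq.iteratedFDerivWithin_eq ?_ ?_ n
    · rw [nhdsWithin_univ]; exact hev
    · exact hev.eq_of_nhds
  rw [iteratedDeriv, this, iteratedFDeriv_const_of_ne (by omega : n ≠ 0)]
  rfl

lemma myPhi_at_zero : myPhi 0 = 1 := by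
  show (myBump 0 : ℂ) = 1
  rw [myBump.one_of_mem_closedBall]
  · simp
  · simp [myBump, Metric.mem_closedBall]

lemma integral_myPsi : (∫ x : ℝ, myPsi x) = 1 := by
  have h0 : 𝓕 (⇑myPsi) 0 = myPhi 0 := by rw [fourier_myPsi]
  rw [fourier_at_zero] at h0
  simpa [myPhi_at_zero] using h0

lemma moments_myPsi {n : ℕ} (hn : 1 ≤ n) :
    (∫ x : ℝ, (x : ℂ) ^ n * myPsi x) = 0 := by
  have h := moment_eq n
  rw [fourier_myPsi, iteratedDeriv_myPhi_zero hn] at h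
  have hne : ((-2 : ℂ) * Real.pi * Complex.I) ^ n ≠ 0 := by
    apply pow_ne_zero
    simp [Real.pi_ne_zero, Complex.I_ne_zero]
  exact (mul_eq_zero.mp h.symm).resolve_left hne

noncomputable def myEta : SchwartzMap ℝ ℝ :=
  SchwartzMap.bilinLeftCLM ((ContinuousLinearMap.mul ℝ ℝ).comp Complex.reCLM)
    (Function.HasTemperateGrowth.const (1 : ℝ)) myPsi

lemma myEta_apply (x : ℝ) : myEta x = (myPsi x).re := by
  show (myPsi x).re * 1 = (myPsi x).re
  simp

/-- There exists a real Schwartz function with `∫ η = 1` whose higher moments all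
vanish: the set `𝒜_∞` of Colombeau mollifiers is nonempty. -/
theorem exists_colombeau_mollifier :
    ∃ η : SchwartzMap ℝ ℝ,
      (∫ x : ℝ, η x = 1) ∧ ∀ n : ℕ, 1 ≤ n → ∫ x : ℝ, x ^ n * η x = 0 := by
  refine ⟨myEta, ?_, ?_⟩
  · have : (∫ x : ℝ, (myPsi x).re) = (∫ x : ℝ, myPsi x).re :=
      integral_re myPsi.integrable
    simp only [myEta_apply]
    rw [this, integral_myPsi]
    simp
  · intro n hn
    have hint : Integrable (fun x : ℝ => (x : ℂ) ^ n * myPsi x) := by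
      have := myPsi_integrable_pow n
      simpa [smul_eq_mul, Complex.real_smul, Complex.ofReal_pow] using this
    have h1 : (∫ x : ℝ, ((x : ℂ) ^ n * myPsi x).re)
        = (∫ x : ℝ, (x : ℂ) ^ n * myPsi x).re := integral_re hint
    have h2 : ∀ x : ℝ, ((x : ℂ) ^ n * myPsi x).re = x ^ n * (myPsi x).re := by
      intro x
      rw [← Complex.ofReal_pow, Complex.re_ofReal_mul]
    simp only [myEta_apply]
    calc (∫ x : ℝ, x ^ n * (myPsi x).re)
        = ∫ x : ℝ, ((x : ℂ) ^ n * myPsi x).re := by simp only [h2]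
      _ = (∫ x : ℝ, (x : ℂ) ^ n * myPsi x).re := h1
      _ = 0 := by rw [moments_myPsi hn]; simp
end

section
/- Let m ≥ 1, let η : ℝ → ℝ be a Schwartz function with ∫ η(z) dz = 1 and ∫ zⁿ η(z) dz = 0 for all 1 ≤ n ≤ m − 1, and let f : ℝ → ℝ be a compactly supported m-times continuously differentiable function. Then there is a constant C such that for all ε ∈ (0,1) and all x ∈ ℝ, |∫ η(z) f(x + εz) dz − f(x)| ≤ C ε^{m}. -/
open MeasureTheory intervalIntegral

lemma taylor_global_bound (m : ℕ) :
    ∀ (f : ℝ → ℝ), ContDiff ℝ m f →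
    ∀ M : ℝ, (∀ t, |iteratedDeriv m f t| ≤ M) →
    ∀ x y : ℝ,
      |f y - ∑ n ∈ Finset.range m, (y - x) ^ n / n.factorial * iteratedDeriv n f x|
        ≤ M * |y - x| ^ m / m.factorial := by
  induction m with
  | zero =>
      intro f _ M hM x y
      simpa using hM y
  | succ m ih =>
      intro f hf M hM x y
      have hf1 : ContDiff ℝ ((m : WithTop ℕ∞) + 1) f := by exact_mod_cast hf
      have hfd : Differentiable ℝ f := (contDiff_succ_iff_deriv.mp hf1).1
      have hf' : ContDiff ℝ m (deriv f) := (contDiff_succ_iff_deriv.mp hf1).2.2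
      have hM' : ∀ t, |iteratedDeriv m (deriv f) t| ≤ M := by
        intro t; rw [← iteratedDeriv_succ']; exact hM t
      have IH := ih (deriv f) hf' M hM' x
      set c : ℕ → ℝ := fun n => iteratedDeriv n f x with hc
      set g : ℝ → ℝ := fun y =>
        f y - ∑ n ∈ Finset.range (m + 1), (y - x) ^ n / n.factorial * c n with hg
      set g' : ℝ → ℝ := fun t =>
        deriv f t - ∑ n ∈ Finset.range m, (t - x) ^ n / n.factorial * c (n + 1) with hg'
      have hgx : g x = 0 := by
        simp [hg, Finset.sum_range_succ', c]
      have hderiv : ∀ t, HasDerivAt g (g' t) t := by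
        intro t
        have hsum : HasDerivAt
            (fun y => ∑ n ∈ Finset.range (m + 1), (y - x) ^ n / n.factorial * c n)
            (∑ n ∈ Finset.range m, (t - x) ^ n / n.factorial * c (n + 1)) t := by
          have hre : ∀ y : ℝ, ∑ n ∈ Finset.range (m + 1), (y - x) ^ n / n.factorial * c n
              = (∑ n ∈ Finset.range m, (y - x) ^ (n + 1) / (n + 1).factorial * c (n + 1))
                + c 0 := by
            intro y; rw [Finset.sum_range_succ']; simp
          simp only [hre]
          have : HasDerivAt
              (fun y => ∑ n ∈ Finset.range m, (y - x) ^ (n + 1) / (n + 1).factorial * c (n + 1))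
              (∑ n ∈ Finset.range m, (t - x) ^ n / n.factorial * c (n + 1)) t := by
            apply HasDerivAt.fun_sum
            intro n _
            have h1 : HasDerivAt (fun y : ℝ => (y - x) ^ (n + 1))
                ((↑(n + 1) : ℝ) * (t - x) ^ n) t := by
              have := ((hasDerivAt_pow (n + 1) (t - x)).comp t
                ((hasDerivAt_id t).sub_const x))
              simpa [Function.comp_def] using this
            have h2 := (h1.div_const ((n + 1).factorial : ℝ)).mul_const (c (n + 1))
            refine h2.congr_deriv ?_
            rw [Nat.factorial_succ]
            push_cast
            have hfac : (n.factorial : ℝ) ≠ 0 := by positivity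
            field_simp
          simpa using this.add_const (c 0)
        exact ((hfd t).hasDerivAt).sub hsum
      have hg'cont : Continuous g' := by
        apply (hf'.continuous).sub
        continuity
      have hbound : ∀ t, |g' t| ≤ M * |t - x| ^ m / m.factorial := by
        intro t
        simp only [hg', hc, iteratedDeriv_succ']
        exact IH t
      have key : g y = ∫ t in x..y, g' t := by
        rw [integral_eq_sub_of_hasDerivAt (fun t _ => hderiv t)
          (hg'cont.intervalIntegrable x y), hgx, sub_zero]
      have hMnonneg : 0 ≤ M := le_trans (abs_nonneg _) (hM' x)
      have hle : |g y| ≤ M * |y - x| ^ (m + 1) / (m + 1).factorial := by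
        rw [key]
        calc |∫ t in x..y, g' t| ≤ ∫ t in Set.uIoc x y, |g' t| := by
              simpa using norm_integral_le_integral_norm_uIoc (a := x) (b := y)
                (f := g') (μ := volume)
          _ ≤ ∫ t in Set.uIoc x y, M / m.factorial * |t - x| ^ m := by
              apply setIntegral_mono_on
              · exact (hg'cont.abs.integrableOn_uIoc)
              · exact ((continuous_const.mul
                  (((continuous_id.sub continuous_const).abs).pow m)).integrableOn_uIoc)
              · exact measurableSet_uIoc
              · intro t _
                calc |g' t| ≤ M * |t - x| ^ m / m.factorial := hbound t
                  _ = M / m.factorial * |t - x| ^ m := by ring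
          _ = M / m.factorial * ∫ t in Set.uIoc x y, |t - x| ^ m := by
              rw [MeasureTheory.integral_const_mul]
          _ = M / m.factorial * (|y - x| ^ (m + 1) / (m + 1)) := by
              rw [integral_pow_abs_sub_uIoc]
          _ = M * |y - x| ^ (m + 1) / (m + 1).factorial := by
              have h1 : ((m + 1).factorial : ℝ) = (m + 1) * m.factorial := by
                exact_mod_cast Nat.factorial_succ m
              have hfac : (m.factorial : ℝ) ≠ 0 := by positivity
              have hm1 : ((m : ℝ) + 1) ≠ 0 := by positivity
              rw [h1]
              field_simp
              try exact Or.inl trivial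
      simpa [hg, c] using hle

lemma hcs_iter (f : ℝ → ℝ) (hfc : HasCompactSupport f) (n : ℕ) :
    HasCompactSupport (iteratedDeriv n f) := by
  induction n with
  | zero => simpa [iteratedDeriv_zero] using hfc
  | succ n ih => rw [iteratedDeriv_succ]; exact ih.deriv

/-- If `η` is a Schwartz function with `∫ η = 1` whose moments of orders
`1,…,m−1` vanish, and `f` is a compactly supported `Cᵐ` function (`m ≥ 1`), then
the mollified embedding of `f` differs from `f` by `O(εᵐ)` uniformly in `x`. -/
theorem mollified_embedding_Cm_estimate (m : ℕ) (hm : 1 ≤ m)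
    (η : SchwartzMap ℝ ℝ) (hη1 : ∫ z, η z = 1)
    (hηn : ∀ n : ℕ, 1 ≤ n → n ≤ m - 1 → ∫ z, z ^ n * η z = 0)
    (f : ℝ → ℝ) (hf : ContDiff ℝ m f) (hfc : HasCompactSupport f) :
    ∃ C : ℝ, ∀ ε ∈ Set.Ioo (0 : ℝ) 1, ∀ x : ℝ,
      |(∫ z, η z * f (x + ε * z)) - f x| ≤ C * ε ^ m := by
  obtain ⟨k, rfl⟩ : ∃ k, m = k + 1 := ⟨m - 1, (Nat.succ_pred_eq_of_pos hm).symm⟩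
  set m := k + 1
  -- bound on the m-th derivative
  obtain ⟨M, hM⟩ := (hcs_iter f hfc m).exists_bound_of_continuous
    (hf.continuous_iteratedDeriv m le_rfl)
  have hM' : ∀ t, |iteratedDeriv m f t| ≤ M := fun t => by
    simpa [Real.norm_eq_abs] using hM t
  have hMnonneg : 0 ≤ M := le_trans (abs_nonneg _) (hM' 0)
  -- bound on f
  obtain ⟨B, hB⟩ := hfc.exists_bound_of_continuous hf.continuous
  have tb := taylor_global_bound m f hf M hM'
  have hηint : Integrable (fun z => (η z : ℝ)) := η.integrable
  have hIn : ∀ n : ℕ, Integrable (fun z : ℝ => z ^ n * η z) := by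
    intro n
    refine (η.integrable_pow_mul volume n).mono'
      ((continuous_pow n).mul η.continuous).aestronglyMeasurable
      (ae_of_all _ fun z => ?_)
    simp [abs_mul, abs_pow, Real.norm_eq_abs]
  have hIm : Integrable (fun z : ℝ => |z| ^ m * |η z|) := by
    simpa [Real.norm_eq_abs] using η.integrable_pow_mul volume m
  refine ⟨M / m.factorial * ∫ z, |z| ^ m * |η z|, ?_⟩
  rintro ε ⟨hε0, hε1⟩ x
  set c : ℕ → ℝ := fun n => iteratedDeriv n f x with hc
  set R : ℝ → ℝ := fun z =>
    f (x + ε * z) - ∑ n ∈ Finset.range m, (ε * z) ^ n / n.factorial * c n with hR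
  have hI0 : Integrable (fun z : ℝ => η z * f (x + ε * z)) := by
    have := Integrable.bdd_mul hηint
      ((hf.continuous.comp (continuous_const.add
        (continuous_const.mul continuous_id))).aestronglyMeasurable)
      (ae_of_all _ fun z => hB (x + ε * z))
    exact this.congr (ae_of_all _ fun z => mul_comm _ _)
  have hIsum : Integrable (fun z : ℝ =>
      ∑ n ∈ Finset.range m, (ε ^ n / n.factorial * c n) * (z ^ n * η z)) := by
    apply MeasureTheory.integrable_finset_sum
    intro n _
    exact (hIn n).const_mul _
  have hIR : Integrable (fun z : ℝ => η z * R z) := by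
    have : (fun z : ℝ => η z * R z) = fun z =>
        η z * f (x + ε * z) -
          ∑ n ∈ Finset.range m, (ε ^ n / n.factorial * c n) * (z ^ n * η z) := by
      funext z
      simp only [hR, mul_sub, Finset.mul_sum]
      congr 1
      exact Finset.sum_congr rfl fun n _ => by ring
    rw [this]
    exact hI0.sub hIsum
  have hsplit : (∫ z, η z * f (x + ε * z)) - f x = ∫ z, η z * R z := by
    have heq : (fun z : ℝ => η z * R z) = fun z =>
        η z * f (x + ε * z) -
          ∑ n ∈ Finset.range m, (ε ^ n / n.factorial * c n) * (z ^ n * η z) := by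
      funext z
      simp only [hR, mul_sub, Finset.mul_sum]
      congr 1
      exact Finset.sum_congr rfl fun n _ => by ring
    rw [heq, integral_sub hI0 hIsum]
    congr 1
    rw [MeasureTheory.integral_finset_sum _ (fun n _ => (hIn n).const_mul _)]
    simp only [MeasureTheory.integral_const_mul]
    rw [Finset.sum_range_succ']
    have hzero : ∀ n ∈ Finset.range k,
        ε ^ (n + 1) / ((n + 1).factorial : ℝ) * c (n + 1) * ∫ z, z ^ (n + 1) * η z = 0 := by
      intro n hn
      rw [hηn (n + 1) (Nat.le_add_left 1 n) (by
        simpa [m] using Nat.succ_le_of_lt (Finset.mem_range.mp hn)), mul_zero]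
    rw [Finset.sum_eq_zero hzero, zero_add]
    simp only [pow_zero, Nat.factorial_zero, Nat.cast_one, div_one, one_mul]
    rw [hη1, mul_one, hc]
    simp [iteratedDeriv_zero]
  rw [hsplit]
  have hbd : ∀ z : ℝ, |η z * R z| ≤ (M / m.factorial * ε ^ m) * (|z| ^ m * |η z|) := by
    intro z
    rw [abs_mul]
    have h1 : |R z| ≤ M * |ε * z| ^ m / m.factorial := by
      have := tb x (x + ε * z)
      simpa [hR, hc, add_sub_cancel_left] using this
    have h2 : |ε * z| ^ m = ε ^ m * |z| ^ m := by
      rw [abs_mul, mul_pow, abs_of_pos hε0]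
    calc |η z| * |R z| ≤ |η z| * (M * |ε * z| ^ m / m.factorial) := by
          exact mul_le_mul_of_nonneg_left h1 (abs_nonneg _)
      _ = (M / m.factorial * ε ^ m) * (|z| ^ m * |η z|) := by rw [h2]; ring
  calc |∫ z, η z * R z| ≤ ∫ z, |η z * R z| := by
        simpa [Real.norm_eq_abs, abs_mul] using
          norm_integral_le_integral_norm (fun z => η z * R z)
    _ ≤ ∫ z, (M / m.factorial * ε ^ m) * (|z| ^ m * |η z|) := by
        exact integral_mono hIR.abs (hIm.const_mul _) hbd
    _ = (M / m.factorial * ∫ z, |z| ^ m * |η z|) * ε ^ m := by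
        rw [MeasureTheory.integral_const_mul]; ring
end

section
/- Let η : ℝ → ℝ be a Schwartz function and ε > 0. The function x ↦ ∫ η(z) |x + εz| dz is twice differentiable on ℝ and its second derivative equals (2/ε) η(−x/ε) for every x ∈ ℝ; that is, the second derivative of the mollified embedding of |x| equals twice the mollified embedding of the Dirac delta. -/
open MeasureTheory

lemma hasDerivAt_integral_Iic (f : ℝ → ℝ) (hf : Integrable f) (hc : Continuous f) (t : ℝ) :
    HasDerivAt (fun u => ∫ z in Set.Iic u, f z) (f t) t := by
  have key : (fun u => ∫ z in Set.Iic u, f z)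
      = fun u => (∫ z in Set.Iic (0:ℝ), f z) + ∫ z in (0:ℝ)..u, f z := by
    funext u
    rw [← intervalIntegral.integral_Iic_sub_Iic hf.integrableOn hf.integrableOn]
    ring
  rw [key]
  exact (intervalIntegral.integral_hasDerivAt_right hf.intervalIntegrable
    (hc.stronglyMeasurableAtFilter _ _) hc.continuousAt).const_add _

/-- For a Schwartz function `η` and `ε > 0`, the mollified embedding of `|x|`,
`F(x) = ∫ η(z) |x + εz| dz`, is twice differentiable and its second derivative
equals `(2/ε) η(−x/ε)`, i.e. twice the embedded Dirac delta. -/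
theorem second_deriv_mollified_abs (η : SchwartzMap ℝ ℝ) (ε : ℝ) (hε : 0 < ε) :
    (∀ x : ℝ,
      DifferentiableAt ℝ (fun x : ℝ => ∫ z, η z * |x + ε * z|) x ∧
      DifferentiableAt ℝ (deriv (fun x : ℝ => ∫ z, η z * |x + ε * z|)) x) ∧
    ∀ x : ℝ,
      deriv (deriv (fun x : ℝ => ∫ z, η z * |x + ε * z|)) x =
        (2 / ε) * η (-x / ε) := by
  have hεne : ε ≠ 0 := hε.ne'
  set I0 : ℝ := ∫ z, η z with hI0
  set I1 : ℝ := ∫ z, z * η z with hI1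
  set A : ℝ → ℝ := fun s => ∫ z in Set.Iic s, η z with hA
  set B : ℝ → ℝ := fun s => ∫ z in Set.Iic s, z * η z with hB
  have hηi : Integrable (fun z => η z) := η.integrable
  have hηc : Continuous fun z : ℝ => η z := η.continuous
  have hzη : Integrable (fun z : ℝ => z * η z) := by
    refine (η.integrable_pow_mul volume 1).mono'
      ((continuous_id.mul hηc).aestronglyMeasurable) ?_
    filter_upwards with z
    simp [Real.norm_eq_abs, abs_mul]
  -- the explicit formula for F
  have hFG : (fun x : ℝ => ∫ z, η z * |x + ε * z|)
      = fun x : ℝ => x * I0 + ε * I1 - 2 * (x * A (-x/ε) + ε * B (-x/ε)) := by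
    funext x
    have h1 : Integrable (fun z : ℝ => η z * (x + ε * z)) := by
      have h := (hηi.const_mul x).add (hzη.const_mul ε)
      refine h.congr (Filter.Eventually.of_forall fun z => ?_)
      simp only [Pi.add_apply]; ring
    have h2 : Integrable (fun z : ℝ => η z * min (x + ε * z) 0) := by
      refine h1.norm.mono' ((hηc.mul (by continuity)).aestronglyMeasurable) ?_
      filter_upwards with z
      have : |min (x + ε * z) 0| ≤ |x + ε * z| := by
        rcases le_total (x + ε * z) 0 with h | h
        · rw [min_eq_left h]
        · rw [min_eq_right h]; simp [abs_nonneg]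
      simp only [Real.norm_eq_abs, abs_mul]
      exact mul_le_mul_of_nonneg_left this (abs_nonneg _)
    have habs : (fun z : ℝ => η z * |x + ε * z|)
        = fun z => η z * (x + ε * z) - 2 * (η z * min (x + ε * z) 0) := by
      funext z
      rcases le_total (x + ε * z) 0 with h | h
      · rw [abs_of_nonpos h, min_eq_left h]; ring
      · rw [abs_of_nonneg h, min_eq_right h]; ring
    rw [habs, integral_sub h1 (h2.const_mul 2), integral_const_mul]
    have e1 : ∫ z, η z * (x + ε * z) = x * I0 + ε * I1 := by
      have : (fun z : ℝ => η z * (x + ε * z)) = fun z => x * η z + ε * (z * η z) := by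
        funext z; ring
      rw [this, integral_add (hηi.const_mul x) (hzη.const_mul ε),
        integral_const_mul, integral_const_mul]
    have hind : (fun z : ℝ => η z * min (x + ε * z) 0)
        = Set.indicator (Set.Iic (-x/ε)) (fun z => η z * (x + ε * z)) := by
      funext z
      by_cases h : z ∈ Set.Iic (-x/ε)
      · have hz : z ≤ -x/ε := h
        have : x + ε * z ≤ 0 := by
          have := mul_le_mul_of_nonneg_left hz hε.le
          rw [mul_div_cancel₀ _ hεne] at this
          linarith [this]
        rw [Set.indicator_of_mem h, min_eq_left this]
      · have hz : -x/ε < z := lt_of_not_ge h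
        have : 0 ≤ x + ε * z := by
          have := mul_le_mul_of_nonneg_left hz.le hε.le
          rw [mul_div_cancel₀ _ hεne] at this
          linarith [this]
        rw [Set.indicator_of_notMem h, min_eq_right this, mul_zero]
    have e2 : ∫ z, η z * min (x + ε * z) 0 = x * A (-x/ε) + ε * B (-x/ε) := by
      rw [hind, integral_indicator measurableSet_Iic]
      have : (fun z : ℝ => η z * (x + ε * z)) = fun z => x * η z + ε * (z * η z) := by
        funext z; ring
      rw [this, integral_add ((hηi.const_mul x).integrableOn) ((hzη.const_mul ε).integrableOn),
        integral_const_mul, integral_const_mul]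
    rw [e1, e2]
  -- derivative facts
  have hinner : ∀ x : ℝ, HasDerivAt (fun x : ℝ => -x/ε) (-1/ε) x := fun x => by
    simpa using ((hasDerivAt_id x).neg.div_const ε)
  have hAd : ∀ s, HasDerivAt A (η s) s := fun s =>
    hasDerivAt_integral_Iic _ hηi hηc s
  have hBd : ∀ s, HasDerivAt B (s * η s) s := fun s =>
    hasDerivAt_integral_Iic _ hzη (continuous_id.mul hηc) s
  have hAc : ∀ x : ℝ, HasDerivAt (fun x : ℝ => A (-x/ε)) (η (-x/ε) * (-1/ε)) x := fun x => by
    have := (hAd (-x/ε)).comp x (hinner x); exact this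
  have hBc : ∀ x : ℝ, HasDerivAt (fun x : ℝ => B (-x/ε)) ((-x/ε) * η (-x/ε) * (-1/ε)) x :=
    fun x => by
      have := (hBd (-x/ε)).comp x (hinner x); exact this
  have hGd : ∀ x : ℝ,
      HasDerivAt (fun x : ℝ => x * I0 + ε * I1 - 2 * (x * A (-x/ε) + ε * B (-x/ε)))
        (I0 - 2 * A (-x/ε)) x := by
    intro x
    have h1 : HasDerivAt (fun x : ℝ => x * I0 + ε * I1) I0 x := by
      simpa using ((hasDerivAt_id x).mul_const I0).add_const (ε * I1)
    have h2 : HasDerivAt (fun x : ℝ => x * A (-x/ε))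
        (1 * A (-x/ε) + x * (η (-x/ε) * (-1/ε))) x := (hasDerivAt_id x).mul (hAc x)
    have h3 : HasDerivAt (fun x : ℝ => ε * B (-x/ε))
        (ε * ((-x/ε) * η (-x/ε) * (-1/ε))) x := (hBc x).const_mul ε
    have h4 := h1.sub ((h2.add h3).const_mul 2)
    refine h4.congr_deriv ?_
    have hεi : ε * ε⁻¹ = 1 := mul_inv_cancel₀ hεne
    linear_combination (-2 * x * η (-x/ε) * ε⁻¹) * hεi
  -- first derivative formula
  have hderiv : deriv (fun x : ℝ => ∫ z, η z * |x + ε * z|)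
      = fun x : ℝ => I0 - 2 * A (-x/ε) := by
    funext x
    rw [hFG]
    exact (hGd x).deriv
  have hHd : ∀ x : ℝ, HasDerivAt (fun x : ℝ => I0 - 2 * A (-x/ε)) ((2/ε) * η (-x/ε)) x := by
    intro x
    have h := ((hAc x).const_mul 2).const_sub I0
    refine h.congr_deriv ?_
    ring
  refine ⟨fun x => ⟨?_, ?_⟩, fun x => ?_⟩
  · rw [hFG]; exact (hGd x).differentiableAt
  · rw [hderiv]; exact (hHd x).differentiableAt
  · rw [hderiv]; exact (hHd x).deriv
end

section
/- Let η : ℝ → ℝ be a Schwartz function with ∫ η(z) dz = 1, and for ε > 0 define H_ε(x) := ∫ η(z) H(x + εz) dz where H is the Heaviside step function (H(y) = 1 for y > 0 and H(y) = 0 for y ≤ 0). Then for every continuous compactly supported T : ℝ → ℝ, lim_{ε → 0⁺} ∫ (H_ε(x)² − H_ε(x)) T(x) dx = 0; that is, the square of the embedded Heaviside function is associated to the Heaviside function. -/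
open MeasureTheory Filter

/-- Let `H` be the Heaviside function and `H_ε(x) = ∫ η(z) H(x + εz) dz` its
mollified embedding with respect to a Schwartz mollifier `η` with `∫ η = 1`.
Then `H_ε² − H_ε` is associated to zero: for every continuous compactly
supported `T`, `∫ (H_ε(x)² − H_ε(x)) T(x) dx → 0` as `ε → 0⁺`. -/
theorem heaviside_squared_associated (η : SchwartzMap ℝ ℝ)
    (hη : ∫ z, η z = 1)
    (H : ℝ → ℝ) (hH : ∀ y : ℝ, H y = if 0 < y then 1 else 0)
    (T : ℝ → ℝ) (hT : Continuous T) (hTc : HasCompactSupport T) :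
    Tendsto
      (fun ε : ℝ => ∫ x,
        ((∫ z, η z * H (x + ε * z)) ^ 2 - ∫ z, η z * H (x + ε * z)) * T x)
      (nhdsWithin 0 (Set.Ioi 0)) (nhds 0) := by
  have hηi : Integrable (fun z => η z) := η.integrable
  set M := ∫ z, |η z| with hMdef
  have hM0 : 0 ≤ M := integral_nonneg fun z => abs_nonneg _
  have hHm : Measurable H := by
    have hHe : H = Set.indicator (Set.Ioi (0:ℝ)) (fun _ => (1:ℝ)) := by
      funext y; rw [hH]; simp [Set.indicator_apply, Set.mem_Ioi]
    rw [hHe]; exact measurable_const.indicator measurableSet_Ioi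
  have hHb : ∀ y, |H y| ≤ 1 := by
    intro y; rw [hH]; split <;> norm_num
  have hFm : ∀ ε x : ℝ, Measurable fun z => η z * H (x + ε * z) := by
    intro ε x
    exact (η.continuous.measurable).mul
      (hHm.comp (measurable_const.add (measurable_const.mul measurable_id)))
  have habs : ∀ ε x z : ℝ, |η z * H (x + ε * z)| ≤ |η z| := by
    intro ε x z
    rw [abs_mul]
    calc |η z| * |H (x + ε*z)| ≤ |η z| * 1 := by gcongr; exact hHb _
      _ = |η z| := mul_one _
  have hFint : ∀ ε x : ℝ, Integrable fun z => η z * H (x + ε * z) := by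
    intro ε x
    refine hηi.abs.mono' (hFm ε x).aestronglyMeasurable ?_
    filter_upwards with z
    rw [Real.norm_eq_abs]
    exact habs ε x z
  set f : ℝ → ℝ → ℝ := fun ε x => ∫ z, η z * H (x + ε * z) with hfdef
  have hfb : ∀ ε x, |f ε x| ≤ M := by
    intro ε x
    calc |f ε x| ≤ ∫ z, |η z * H (x + ε * z)| := by
          have h := norm_integral_le_integral_norm (μ := volume)
            (fun z => η z * H (x + ε * z))
          simp only [Real.norm_eq_abs] at h
          exact h
      _ ≤ M := integral_mono (hFint ε x).abs hηi.abs (fun z => habs ε x z)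
  -- pointwise limit of f ε x for x ≠ 0
  have hlim : ∀ x : ℝ, x ≠ 0 →
      Tendsto (fun ε => f ε x) (nhdsWithin 0 (Set.Ioi 0))
        (nhds (if 0 < x then 1 else 0)) := by
    intro x hx
    have key : ∀ᵐ z : ℝ, Tendsto (fun ε => η z * H (x + ε * z))
        (nhdsWithin (0:ℝ) (Set.Ioi 0)) (nhds (η z * (if 0 < x then 1 else 0))) := by
      filter_upwards with z
      have hδ : (0:ℝ) < |x| / (|z| + 1) := by
        have : (0:ℝ) < |x| := abs_pos.mpr hx
        positivity
    -- eventually the integrand is constant in ε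
      have hev : ∀ᶠ ε in nhdsWithin (0:ℝ) (Set.Ioi 0),
          η z * H (x + ε * z) = η z * (if 0 < x then 1 else 0) := by
        have h1 : ∀ᶠ ε in nhdsWithin (0:ℝ) (Set.Ioi 0),
            ε ∈ Set.Ioo 0 (|x| / (|z|+1)) :=
          Ioo_mem_nhdsGT_of_mem ⟨le_refl 0, hδ⟩
        filter_upwards [h1] with ε hε
        have hz1 : (0:ℝ) < |z| + 1 := by positivity
        have hεz : |ε * z| < |x| := by
          rw [abs_mul, abs_of_pos hε.1]
          calc ε * |z| ≤ ε * (|z| + 1) := by nlinarith [hε.1, abs_nonneg z]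
            _ < |x| := by
                have := (lt_div_iff₀ hz1).mp hε.2
                linarith
        rcases lt_or_ge 0 x with hxpos | hxneg
        · have : 0 < x + ε * z := by
            have h2 : -(ε*z) ≤ |ε * z| := neg_le_abs _
            rw [abs_of_pos hxpos] at hεz
            linarith
          rw [hH, if_pos this, if_pos hxpos]
        · have hxneg' : x < 0 := lt_of_le_of_ne hxneg hx
          have : ¬ (0 < x + ε * z) := by
            have h2 : ε * z ≤ |ε * z| := le_abs_self _
            rw [abs_of_neg hxneg'] at hεz
            push_neg
            linarith
          rw [hH, if_neg this, mul_zero, if_neg (not_lt.mpr hxneg), mul_zero]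
      exact Filter.Tendsto.congr' (EventuallyEq.symm hev) tendsto_const_nhds
    have hdct := tendsto_integral_filter_of_dominated_convergence
      (μ := volume) (bound := fun z => |η z|)
      (F := fun ε z => η z * H (x + ε * z))
      (f := fun z => η z * (if 0 < x then 1 else 0))
      (Filter.Eventually.of_forall fun ε => (hFm ε x).aestronglyMeasurable)
      (Filter.Eventually.of_forall fun ε =>
        Filter.Eventually.of_forall fun z => by
          rw [Real.norm_eq_abs]
          exact habs ε x z)
      hηi.abs key
    have hval : (∫ z, η z * (if 0 < x then 1 else 0)) = (if 0 < x then 1 else 0) := by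
      rw [integral_mul_const, hη, one_mul]
    rw [hval] at hdct
    exact hdct
  -- measurability of f ε
  have hfm : ∀ ε : ℝ, AEStronglyMeasurable (f ε) volume := by
    intro ε
    have hjoint : StronglyMeasurable fun p : ℝ × ℝ => η p.2 * H (p.1 + ε * p.2) := by
      apply Measurable.stronglyMeasurable
      exact (η.continuous.measurable.comp measurable_snd).mul
        (hHm.comp (measurable_fst.add (measurable_const.mul measurable_snd)))
    exact (StronglyMeasurable.integral_prod_right' hjoint).aestronglyMeasurable
  -- final dominated convergence
  have hTi : Integrable T := hT.integrable_of_hasCompactSupport hTc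
  have hbound_int : Integrable (fun x => (M^2 + M) * |T x|) := hTi.abs.const_mul _
  have hmain := tendsto_integral_filter_of_dominated_convergence
    (μ := volume) (bound := fun x => (M^2 + M) * |T x|)
    (F := fun ε x => ((f ε x)^2 - f ε x) * T x)
    (f := fun _ => (0:ℝ))
    (Filter.Eventually.of_forall fun ε =>
      (((hfm ε).pow 2).sub (hfm ε)).mul hT.aestronglyMeasurable)
    (Filter.Eventually.of_forall fun ε =>
      Filter.Eventually.of_forall fun x => by
        rw [Real.norm_eq_abs, abs_mul]
        have h1 : |f ε x| ≤ M := hfb ε x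
        have h2 : |(f ε x)^2 - f ε x| ≤ M^2 + M := by
          calc |(f ε x)^2 - f ε x| ≤ |(f ε x)^2| + |f ε x| := abs_sub _ _
            _ = |f ε x|^2 + |f ε x| := by rw [abs_pow] -- maybe sq_abs
            _ ≤ M^2 + M := by nlinarith [abs_nonneg (f ε x)]
        exact mul_le_mul_of_nonneg_right h2 (abs_nonneg (T x)))
    hbound_int
    (by
      have hae : ∀ᵐ x : ℝ, x ≠ 0 := by
        refine (ae_iff.mpr ?_)
        simp [measure_singleton]
      filter_upwards [hae] with x hx
      have h := hlim x hx
      have h2 := ((h.pow 2).sub h).mul_const (T x)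
      have hz : ((if 0 < x then (1:ℝ) else 0)^2 - (if 0 < x then 1 else 0)) * T x = 0 := by
        split <;> ring
      rwa [hz] at h2)
  have h0 : (∫ _x : ℝ, (0:ℝ)) = 0 := integral_zero _ _
  rw [h0] at hmain
  exact hmain
end

section
/- Let η : ℝ → ℝ be a Schwartz function with ∫ η(z) dz = 1, and for ε > 0 define H_ε(x) := ∫ η(z) H(x + εz) dz where H is the Heaviside step function. Then for every ε > 0, ∫ (H_ε(x)² − H_ε(x)) · H_ε'(x) dx = 1/3 − 1/2 = −1/6. Hence the infinitesimal difference H_ε² − H_ε gives a nonzero finite result when multiplied by the unbounded family H_ε' = δ_ε and integrated, independently of ε and of the mollifier η. -/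
open MeasureTheory Filter Set Topology

/-- For the embedded Heaviside function `H_ε(x) = ∫ η(z) H(x + εz) dz`
(with `η` a Schwartz mollifier, `∫ η = 1`), one has for every `ε > 0`
`∫ (H_ε² − H_ε) · H_ε' dx = 1/3 − 1/2 = −1/6`, independently of `ε` and `η`. -/
theorem heaviside_squared_minus_heaviside_times_delta (η : SchwartzMap ℝ ℝ)
    (hη : ∫ z, η z = 1)
    (H : ℝ → ℝ) (hH : ∀ y : ℝ, H y = if 0 < y then 1 else 0)
    (ε : ℝ) (hε : 0 < ε) :
    ∫ x : ℝ,
      ((∫ z, η z * H (x + ε * z)) ^ 2 - ∫ z, η z * H (x + ε * z)) *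
        deriv (fun x : ℝ => ∫ z, η z * H (x + ε * z)) x
      = 1 / 3 - 1 / 2 := by
  have hint : Integrable (fun z : ℝ => η z) := η.integrable
  set Φ : ℝ → ℝ := fun t => ∫ z in Iic t, η z with hΦdef
  -- FTC: Φ has derivative η
  have hΦd : ∀ t : ℝ, HasDerivAt Φ (η t) t := by
    intro t
    have h1 : ∀ s : ℝ, Φ s = Φ 0 + ∫ z in (0:ℝ)..s, η z := by
      intro s
      rw [← intervalIntegral.integral_Iic_sub_Iic hint.integrableOn hint.integrableOn]
      ring
    have h2 : HasDerivAt (fun s : ℝ => Φ 0 + ∫ z in (0:ℝ)..s, η z) (η t) t := by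
      refine HasDerivAt.const_add (Φ 0) ?_
      exact intervalIntegral.integral_hasDerivAt_right
        hint.intervalIntegrable
        η.continuous.aestronglyMeasurable.stronglyMeasurableAtFilter
        η.continuous.continuousAt
    exact (funext h1 : Φ = _) ▸ h2
  -- the regularized Heaviside
  set g : ℝ → ℝ := fun x => Φ (-x / ε) with hgdef
  have hgd : ∀ x : ℝ, HasDerivAt g (η (-x / ε) * (-1 / ε)) x := by
    intro x
    have hin : HasDerivAt (fun x : ℝ => -x / ε) (-1 / ε) x := by
      simpa using ((hasDerivAt_id x).neg.div_const ε)
    exact (hΦd (-x / ε)).comp x hin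
  -- rewrite the inner integral
  have hF : ∀ x : ℝ, (∫ z, η z * H (x + ε * z)) = 1 - g x := by
    intro x
    have key : (fun z : ℝ => η z * H (x + ε * z))
        = Set.indicator (Ioi (-x / ε)) (fun z => η z) := by
      funext z
      rw [hH]
      by_cases h : -x / ε < z
      · have hz : 0 < x + ε * z := by
          have := (div_lt_iff₀ hε).mp h
          nlinarith
        rw [Set.indicator_of_mem (Set.mem_Ioi.mpr h)]
        simp [hz]
      · have hz : ¬ 0 < x + ε * z := by
          have h' := (le_div_iff₀ hε).mpr (le_of_not_gt (by
            intro hc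
            exact h ((div_lt_iff₀ hε).mpr hc)))
          have := (not_lt.mp h)
          have h2 : z * ε ≤ -x := (le_div_iff₀ hε).mp this
          nlinarith
        rw [Set.indicator_of_notMem (by simpa using h)]
        simp [hz]
    rw [key, integral_indicator measurableSet_Ioi]
    have := intervalIntegral.integral_Iic_add_Ioi (b := -x / ε) (f := fun z : ℝ => η z) (μ := volume)
      hint.integrableOn hint.integrableOn
    rw [hη] at this
    have : (∫ z in Ioi (-x / ε), η z) = 1 - Φ (-x / ε) := by linarith
    simpa [hgdef] using this
  -- compute the derivative of the regularized Heaviside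
  have hderivF : ∀ x : ℝ,
      deriv (fun x : ℝ => ∫ z, η z * H (x + ε * z)) x = η (-x / ε) / ε := by
    intro x
    have : (fun x : ℝ => ∫ z, η z * H (x + ε * z)) = fun x => 1 - g x := funext hF
    rw [this]
    have hd : HasDerivAt (fun x => 1 - g x) (-(η (-x / ε) * (-1 / ε))) x :=
      (hgd x).const_sub 1
    rw [hd.deriv]
    field_simp
  -- the antiderivative ψ = g²/2 − g³/3
  set ψ : ℝ → ℝ := fun x => (g x) ^ 2 / 2 - (g x) ^ 3 / 3 with hψdef
  set f' : ℝ → ℝ := fun x => ((1 - g x) ^ 2 - (1 - g x)) * (η (-x / ε) / ε) with hf'def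
  have hψd : ∀ x : ℝ, HasDerivAt ψ (f' x) x := by
    intro x
    have h1 : HasDerivAt ψ
        ((2 * g x ^ 1 * (η (-x / ε) * (-1 / ε))) / 2
          - (3 * g x ^ 2 * (η (-x / ε) * (-1 / ε))) / 3) x :=
      (((hgd x).pow 2).div_const 2).sub (((hgd x).pow 3).div_const 3)
    convert h1 using 1
    simp only [hf'def]
    field_simp
    ring
  -- integrability of f'
  have hηcomp : Integrable (fun x : ℝ => η (-x / ε) / ε) := by
    have h0 : Integrable (fun x : ℝ => η ((-ε⁻¹) * x)) :=
      hint.comp_mul_left' (by simp [hε.ne'] : (-ε⁻¹ : ℝ) ≠ 0)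
    have : (fun x : ℝ => η (-x / ε)) = fun x : ℝ => η ((-ε⁻¹) * x) := by
      funext x; congr 1; field_simp
    have heq2 : (fun x : ℝ => η (-x / ε) / ε) = fun x => η ((-ε⁻¹) * x) / ε := by
      funext x; congr 2; field_simp
    rw [heq2]
    exact h0.div_const ε
  have hgcont : Continuous g :=
    continuous_iff_continuousAt.mpr fun x => (hgd x).continuousAt
  have hgbdd : ∃ C : ℝ, ∀ x : ℝ, ‖g x‖ ≤ C := by
    refine ⟨∫ z, ‖η z‖, fun x => ?_⟩
    calc ‖g x‖ = ‖∫ z in Iic (-x / ε), η z‖ := rfl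
      _ ≤ ∫ z in Iic (-x / ε), ‖η z‖ := norm_integral_le_integral_norm _
      _ ≤ ∫ z, ‖η z‖ :=
        setIntegral_le_integral hint.norm (Eventually.of_forall fun z => norm_nonneg _)
  have hf'int : Integrable f' := by
    obtain ⟨C, hC⟩ := hgbdd
    refine hηcomp.bdd_mul (c := C ^ 2 + 3 * C + 2) ?_ (Eventually.of_forall fun x => ?_)
    · exact (((continuous_const.sub hgcont).pow 2).sub
        (continuous_const.sub hgcont)).aestronglyMeasurable
    · have h1 : ‖g x‖ ≤ C := hC x
      have h2 : 0 ≤ ‖g x‖ := norm_nonneg _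
      have h3 : -‖g x‖ ≤ g x := neg_abs_le _
      have h4 : g x ≤ ‖g x‖ := le_abs_self _
      have : ‖(1 - g x) ^ 2 - (1 - g x)‖ ≤ (1 - g x) ^ 2 + ‖1 - g x‖ := by
        calc ‖(1 - g x) ^ 2 - (1 - g x)‖ ≤ ‖(1 - g x) ^ 2‖ + ‖1 - g x‖ := norm_sub_le _ _
          _ = (1 - g x) ^ 2 + ‖1 - g x‖ := by rw [Real.norm_eq_abs, abs_pow, sq_abs]
      have h5 : ‖1 - g x‖ ≤ 1 + C := by
        calc ‖1 - g x‖ ≤ ‖(1:ℝ)‖ + ‖g x‖ := norm_sub_le _ _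
          _ ≤ 1 + C := by rw [norm_one]; linarith
      have h6 : (1 - g x) ^ 2 ≤ (1 + C) ^ 2 := by nlinarith [sq_abs (1 - g x), sq_nonneg (‖1 - g x‖ - (1 + C))]
      calc ‖(1 - g x) ^ 2 - (1 - g x)‖ ≤ (1 - g x) ^ 2 + ‖1 - g x‖ := this
        _ ≤ (1 + C) ^ 2 + (1 + C) := by linarith
        _ = C ^ 2 + 3 * C + 2 := by ring
  -- limits of Φ
  have hΦtop : Tendsto Φ atTop (𝓝 1) := by
    have h := tendsto_setIntegral_of_monotone (μ := volume)
      (s := fun t : ℝ => Iic t) (f := fun z : ℝ => η z)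
      (fun _ => measurableSet_Iic) (fun a b hab => Iic_subset_Iic.mpr hab)
      (by rw [iUnion_Iic]; exact hint.integrableOn)
    rwa [iUnion_Iic, setIntegral_univ, hη] at h
  have hΦbot : Tendsto Φ atBot (𝓝 0) := by
    have h := tendsto_setIntegral_of_antitone (μ := volume)
      (s := fun t : ℝ => Iic (-t)) (f := fun z : ℝ => η z)
      (fun _ => measurableSet_Iic)
      (fun a b hab => Iic_subset_Iic.mpr (by linarith))
      ⟨0, hint.integrableOn⟩
    have hempty : (⋂ t : ℝ, Iic (-t)) = (∅ : Set ℝ) := by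
      ext x
      simp only [mem_iInter, mem_Iic, mem_empty_iff_false, iff_false, not_forall, not_le]
      exact ⟨-(x - 1), by linarith⟩
    rw [hempty] at h
    simp only [Measure.restrict_empty, integral_zero_measure] at h
    have h2 := h.comp (tendsto_neg_atBot_atTop (G := ℝ))
    have h3 : ((fun i : ℝ => ∫ z in Iic (-i), η z) ∘ Neg.neg) = Φ := by
      funext x; simp [Function.comp, hΦdef]
    rwa [h3] at h2
  -- limits of g and ψ
  have hxtop : Tendsto (fun x : ℝ => -x / ε) atTop atBot := by
    exact (tendsto_neg_atTop_atBot (G := ℝ)).atBot_div_const hε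
  have hxbot : Tendsto (fun x : ℝ => -x / ε) atBot atTop := by
    exact (tendsto_neg_atBot_atTop (G := ℝ)).atTop_div_const hε
  have hgtop : Tendsto g atTop (𝓝 0) := hΦbot.comp hxtop
  have hgbot : Tendsto g atBot (𝓝 1) := hΦtop.comp hxbot
  have hψtop : Tendsto ψ atTop (𝓝 ((0:ℝ) ^ 2 / 2 - 0 ^ 3 / 3)) :=
    ((hgtop.pow 2).div_const 2).sub ((hgtop.pow 3).div_const 3)
  have hψbot : Tendsto ψ atBot (𝓝 ((1:ℝ) ^ 2 / 2 - 1 ^ 3 / 3)) :=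
    ((hgbot.pow 2).div_const 2).sub ((hgbot.pow 3).div_const 3)
  have hmain : ∫ x : ℝ, f' x
      = ((0:ℝ) ^ 2 / 2 - 0 ^ 3 / 3) - ((1:ℝ) ^ 2 / 2 - 1 ^ 3 / 3) :=
    integral_of_hasDerivAt_of_tendsto hψd hf'int hψbot hψtop
  have heq : (fun x : ℝ =>
      ((∫ z, η z * H (x + ε * z)) ^ 2 - ∫ z, η z * H (x + ε * z)) *
        deriv (fun x : ℝ => ∫ z, η z * H (x + ε * z)) x) = f' := by
    funext x
    rw [hF x, hderivF x]
  rw [heq, hmain]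
  norm_num
end

section
/- Let n ≥ 1, let η : ℝ → ℝ be a Schwartz function, and let δ_ε(x) := (1/ε) η(−x/ε) be the embedded Dirac delta. Then for every continuous compactly supported T : ℝ → ℝ, lim_{ε → 0⁺} ε^{n−1} ∫ δ_ε(x)ⁿ T(x) dx = T(0) · ∫ η(z)ⁿ dz. In particular, for n ≥ 2 and T(0) ∫ ηⁿ ≠ 0, the n-th power of the embedded delta function has no associated distribution, but it is a moderate family of order O(ε^{−n}). -/
open MeasureTheory Filter

private lemma eta_bound (η : SchwartzMap ℝ ℝ) : ∃ M : ℝ, 0 < M ∧ ∀ x : ℝ, |η x| ≤ M := by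
  obtain ⟨C, hC, h⟩ := η.decay 0 0
  exact ⟨C, hC, fun x => by simpa [Real.norm_eq_abs] using h x⟩

private lemma int_abs_pow (n : ℕ) (hn : 1 ≤ n) (η : SchwartzMap ℝ ℝ) (c : ℝ) :
    Integrable (fun u : ℝ => c * |η u| ^ n) := by
  obtain ⟨M, hM, hMb⟩ := eta_bound η
  have hmeas : AEStronglyMeasurable (fun u : ℝ => c * |η u| ^ n) volume :=
    (continuous_const.mul (η.continuous.abs.pow n)).aestronglyMeasurable
  refine Integrable.mono' ((η.integrable.abs.const_mul (|c| * M ^ (n - 1)))) hmeas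
    (Filter.Eventually.of_forall fun u => ?_)
  have h1 : |η u| ^ n ≤ M ^ (n - 1) * |η u| := by
    calc |η u| ^ n = |η u| ^ (n - 1) * |η u| := by
          rw [← pow_succ]; congr 1; omega
      _ ≤ M ^ (n - 1) * |η u| :=
          mul_le_mul_of_nonneg_right (pow_le_pow_left₀ (abs_nonneg _) (hMb u) _) (abs_nonneg _)
  calc ‖c * |η u| ^ n‖ = |c| * |η u| ^ n := by
        rw [norm_mul, Real.norm_eq_abs, Real.norm_eq_abs, abs_pow, abs_abs]
    _ ≤ |c| * (M ^ (n - 1) * |η u|) := mul_le_mul_of_nonneg_left h1 (abs_nonneg _)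
    _ = |c| * M ^ (n - 1) * |η u| := by ring

private lemma main_limit (n : ℕ) (hn : 1 ≤ n) (η : SchwartzMap ℝ ℝ)
    (T : ℝ → ℝ) (hTc : Continuous T) (hTs : HasCompactSupport T) :
    Tendsto (fun ε : ℝ => ε ^ (n - 1) * ∫ x, ((1 / ε) * η (-x / ε)) ^ n * T x)
      (nhdsWithin 0 (Set.Ioi 0)) (nhds (T 0 * ∫ z, (η z) ^ n)) := by
  obtain ⟨CT, hCT⟩ : ∃ CT : ℝ, ∀ x, |T x| ≤ CT := by
    obtain ⟨CT, hCT⟩ := (hTc.norm.bddAbove_range_of_hasCompactSupport hTs.norm)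
    exact ⟨CT, fun x => hCT (Set.mem_range_self x)⟩
  have key : ∀ ε : ℝ, 0 < ε →
      ε ^ (n - 1) * ∫ x, ((1 / ε) * η (-x / ε)) ^ n * T x
        = ∫ u, (η u) ^ n * T (-(ε * u)) := by
    intro ε hε
    have hεne : ε ≠ 0 := ne_of_gt hε
    have h1 : (fun x : ℝ => ((1 / ε) * η (-x / ε)) ^ n * T x)
        = fun x : ℝ => (1 / ε) ^ n * ((fun u => (η u) ^ n * T (-(ε * u))) (-x / ε)) := by
      funext x
      have hx : -(ε * (-x / ε)) = x := by field_simp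
      simp only [hx, mul_pow]; ring
    rw [h1, integral_const_mul]
    have h2 : (∫ x : ℝ, (fun u => (η u) ^ n * T (-(ε * u))) (-x / ε))
        = |ε| • ∫ u, (η u) ^ n * T (-(ε * u)) := by
      have hneg := integral_neg_eq_self
        (fun x : ℝ => (fun u => (η u) ^ n * T (-(ε * u))) (x / ε)) volume
      simp only [neg_div] at hneg ⊢
      rw [hneg, MeasureTheory.Measure.integral_comp_div (fun u => (η u) ^ n * T (-(ε * u))) ε]
    rw [h2, abs_of_pos hε, smul_eq_mul]
    have h3 : ε ^ (n - 1) * ((1 / ε) ^ n * ε) = 1 := by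
      rw [div_pow, one_pow, div_mul_eq_mul_div, one_mul, mul_div_assoc']
      rw [← pow_succ, div_eq_one_iff_eq (by positivity)]
      congr 1
      omega
    calc ε ^ (n - 1) * ((1 / ε) ^ n * (ε * ∫ u, (η u) ^ n * T (-(ε * u))))
        = (ε ^ (n - 1) * ((1 / ε) ^ n * ε)) * ∫ u, (η u) ^ n * T (-(ε * u)) := by ring
      _ = ∫ u, (η u) ^ n * T (-(ε * u)) := by rw [h3, one_mul]
  have hlim : Tendsto (fun ε : ℝ => ∫ u, (η u) ^ n * T (-(ε * u)))
      (nhdsWithin 0 (Set.Ioi 0)) (nhds (∫ u, (η u) ^ n * T 0)) := by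
    apply tendsto_integral_filter_of_dominated_convergence (bound := fun u => CT * |η u| ^ n)
    · filter_upwards with ε
      exact ((η.continuous.pow n).mul
        (hTc.comp (continuous_const.mul continuous_id).neg)).aestronglyMeasurable
    · filter_upwards with ε
      filter_upwards with u
      calc ‖(η u) ^ n * T (-(ε * u))‖ = |η u| ^ n * |T (-(ε * u))| := by
            rw [norm_mul, Real.norm_eq_abs, Real.norm_eq_abs, abs_pow]
        _ ≤ |η u| ^ n * CT := mul_le_mul_of_nonneg_left (hCT _) (by positivity)
        _ = CT * |η u| ^ n := by ring
    · exact int_abs_pow n hn η CT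
    · filter_upwards with u
      have h0 : Tendsto (fun ε : ℝ => -(ε * u)) (nhdsWithin 0 (Set.Ioi 0)) (nhds 0) := by
        have := ((continuous_id.mul (continuous_const : Continuous fun _ : ℝ => u)).neg).tendsto 0
        simpa [Pi.neg_def, Pi.mul_def] using this.mono_left nhdsWithin_le_nhds
      exact (((hTc.tendsto 0).comp h0).const_mul _)
  have hval : (∫ u, (η u) ^ n * T 0) = T 0 * ∫ z, (η z) ^ n := by
    rw [integral_mul_const]
    exact mul_comm _ _
  rw [hval] at hlim
  refine hlim.congr' ?_
  filter_upwards [self_mem_nhdsWithin] with ε hε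
  exact (key ε hε).symm

/-- For `n ≥ 1` and `δ_ε(x) = (1/ε) η(−x/ε)` the embedded Dirac delta of a
Schwartz function `η`: for every continuous compactly supported `T`,
`ε^{n−1} ∫ δ_εⁿ T → T 0 · ∫ ηⁿ` as `ε → 0⁺`; in particular for `n ≥ 2` with
`T 0 · ∫ ηⁿ ≠ 0` the family `∫ δ_εⁿ T` has no finite limit (no associated
distribution); and `δ_εⁿ` is moderate: `|δ_ε(x)ⁿ| ≤ C / εⁿ` on `(0,1)`. -/
theorem delta_pow_scaled_limit (n : ℕ) (hn : 1 ≤ n) (η : SchwartzMap ℝ ℝ) :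
    (∀ T : ℝ → ℝ, Continuous T → HasCompactSupport T →
      Tendsto (fun ε : ℝ => ε ^ (n - 1) * ∫ x, ((1 / ε) * η (-x / ε)) ^ n * T x)
        (nhdsWithin 0 (Set.Ioi 0)) (nhds (T 0 * ∫ z, (η z) ^ n)) ∧
      (2 ≤ n → T 0 * (∫ z, (η z) ^ n) ≠ 0 →
        ¬ ∃ L : ℝ, Tendsto (fun ε : ℝ => ∫ x, ((1 / ε) * η (-x / ε)) ^ n * T x)
            (nhdsWithin 0 (Set.Ioi 0)) (nhds L))) ∧
    ∃ C : ℝ, ∀ ε ∈ Set.Ioo (0 : ℝ) 1, ∀ x : ℝ,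
      |((1 / ε) * η (-x / ε)) ^ n| ≤ C / ε ^ n := by
  constructor
  · intro T hTc hTs
    refine ⟨main_limit n hn η T hTc hTs, ?_⟩
    rintro hn2 hne ⟨L, hL⟩
    have h1 : Tendsto (fun ε : ℝ => ε ^ (n - 1)) (nhdsWithin 0 (Set.Ioi 0)) (nhds 0) := by
      have h := (continuous_pow (n - 1)).tendsto (0 : ℝ)
      rw [zero_pow (by omega : n - 1 ≠ 0)] at h
      exact h.mono_left nhdsWithin_le_nhds
    have h2 : Tendsto (fun ε : ℝ => ε ^ (n - 1) * ∫ x, ((1 / ε) * η (-x / ε)) ^ n * T x)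
        (nhdsWithin 0 (Set.Ioi 0)) (nhds (0 * L)) := h1.mul hL
    rw [zero_mul] at h2
    exact hne (tendsto_nhds_unique (main_limit n hn η T hTc hTs) h2)
  · obtain ⟨M, hM, hMb⟩ := eta_bound η
    refine ⟨M ^ n, fun ε hε x => ?_⟩
    have hε0 : 0 < ε := hε.1
    have hb : |(1 / ε) * η (-x / ε)| ≤ M / ε := by
      rw [abs_mul, abs_of_pos (by positivity : (0:ℝ) < 1 / ε), one_div, div_eq_mul_inv M, mul_comm M]
      exact mul_le_mul_of_nonneg_left (hMb _) (by positivity)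
    calc |((1 / ε) * η (-x / ε)) ^ n| = |(1 / ε) * η (-x / ε)| ^ n := by rw [abs_pow]
      _ ≤ (M / ε) ^ n := pow_le_pow_left₀ (abs_nonneg _) hb n
      _ = M ^ n / ε ^ n := div_pow M ε n
end

section
/- Let η : ℝ → ℝ be a Schwartz function with ∫ η(z) dz = 1, and let f₁, f₂ : ℝ → ℝ be continuous compactly supported functions with mollified embeddings f_{i,ε}(x) := ∫ η(z) f_i(x + εz) dz. Then for every continuous compactly supported T : ℝ → ℝ, lim_{ε → 0⁺} ∫ f_{1,ε}(x) f_{2,ε}(x) T(x) dx = ∫ f₁(x) f₂(x) T(x) dx; that is, the product of the embeddings of two continuous functions is associated to the embedding of their pointwise product. -/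
open MeasureTheory Filter

private lemma moll_bound (η : SchwartzMap ℝ ℝ) {f : ℝ → ℝ} {C : ℝ}
    (hC : ∀ x, ‖f x‖ ≤ C) (_hf : Continuous f) (ε x : ℝ) :
    ‖∫ z, η z * f (x + ε * z)‖ ≤ (∫ z, ‖η z‖) * C := by
  calc ‖∫ z, η z * f (x + ε * z)‖ ≤ ∫ z, ‖η z * f (x + ε * z)‖ :=
        norm_integral_le_integral_norm _
    _ ≤ ∫ z, ‖η z‖ * C := by
        apply integral_mono_of_nonneg
        · filter_upwards with z using norm_nonneg _
        · exact η.integrable.norm.mul_const C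
        · filter_upwards with z
          rw [norm_mul]
          exact mul_le_mul_of_nonneg_left (hC _) (norm_nonneg _)
    _ = (∫ z, ‖η z‖) * C := by rw [integral_mul_const]

private lemma moll_cont (η : SchwartzMap ℝ ℝ) {f : ℝ → ℝ} {C : ℝ}
    (hC : ∀ x, ‖f x‖ ≤ C) (hf : Continuous f) (ε : ℝ) :
    Continuous fun x => ∫ z, η z * f (x + ε * z) := by
  apply continuous_of_dominated (bound := fun z => ‖η z‖ * C)
  · intro x
    exact (η.continuous.mul (hf.comp (by continuity))).aestronglyMeasurable
  · intro x
    filter_upwards with z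
    rw [norm_mul]
    exact mul_le_mul_of_nonneg_left (hC _) (norm_nonneg _)
  · exact η.integrable.norm.mul_const C
  · filter_upwards with z
    exact continuous_const.mul (hf.comp (by continuity))

private lemma moll_tendsto (η : SchwartzMap ℝ ℝ) (hη : ∫ z, η z = 1)
    {f : ℝ → ℝ} {C : ℝ} (hC : ∀ x, ‖f x‖ ≤ C) (hf : Continuous f) (x : ℝ) :
    Tendsto (fun ε : ℝ => ∫ z, η z * f (x + ε * z))
      (nhdsWithin 0 (Set.Ioi 0)) (nhds (f x)) := by
  have key : (f x : ℝ) = ∫ z, η z * f x := by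
    rw [integral_mul_const, hη, one_mul]
  rw [key]
  apply tendsto_integral_filter_of_dominated_convergence (fun z => ‖η z‖ * C)
  · filter_upwards with ε
    exact (η.continuous.mul (hf.comp (by continuity))).aestronglyMeasurable
  · filter_upwards with ε
    filter_upwards with z
    rw [norm_mul]
    exact mul_le_mul_of_nonneg_left (hC _) (norm_nonneg _)
  · exact η.integrable.norm.mul_const C
  · filter_upwards with z
    have hc : Continuous fun ε : ℝ => η z * f (x + ε * z) :=
      continuous_const.mul (hf.comp (by continuity))
    have := (hc.tendsto 0).mono_left (nhdsWithin_le_nhds (s := Set.Ioi 0))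
    simpa using this

/-- For a Schwartz mollifier `η` with `∫ η = 1` and continuous compactly
supported `f₁`, `f₂`, the product of the mollified embeddings of `f₁` and `f₂`
is associated to the pointwise product `f₁·f₂`: for every continuous compactly
supported `T`, `∫ f_{1,ε} f_{2,ε} T → ∫ f₁ f₂ T` as `ε → 0⁺`. -/
theorem product_embeddings_associated (η : SchwartzMap ℝ ℝ)
    (hη : ∫ z, η z = 1)
    (f₁ f₂ : ℝ → ℝ) (hf₁ : Continuous f₁) (hf₁c : HasCompactSupport f₁)
    (hf₂ : Continuous f₂) (hf₂c : HasCompactSupport f₂)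
    (T : ℝ → ℝ) (hT : Continuous T) (hTc : HasCompactSupport T) :
    Tendsto
      (fun ε : ℝ => ∫ x,
        (∫ z, η z * f₁ (x + ε * z)) * (∫ z, η z * f₂ (x + ε * z)) * T x)
      (nhdsWithin 0 (Set.Ioi 0)) (nhds (∫ x, f₁ x * f₂ x * T x)) := by
  obtain ⟨C₁, hC₁⟩ := hf₁c.exists_bound_of_continuous hf₁
  obtain ⟨C₂, hC₂⟩ := hf₂c.exists_bound_of_continuous hf₂
  set I := ∫ z, ‖η z‖ with hI
  apply tendsto_integral_filter_of_dominated_convergence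
    (fun x => (I * C₁) * (I * C₂) * ‖T x‖)
  · filter_upwards with ε
    exact (((moll_cont η hC₁ hf₁ ε).mul (moll_cont η hC₂ hf₂ ε)).mul
      hT).aestronglyMeasurable
  · filter_upwards with ε
    filter_upwards with x
    rw [norm_mul, norm_mul]
    have h1 := moll_bound η hC₁ hf₁ ε x
    have h2 := moll_bound η hC₂ hf₂ ε x
    have := mul_le_mul h1 h2 (norm_nonneg _) ((norm_nonneg _).trans h1)
    exact mul_le_mul_of_nonneg_right this (norm_nonneg _)
  · exact ((hT.integrable_of_hasCompactSupport hTc).norm.const_mul _)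
  · filter_upwards with x
    exact ((moll_tendsto η hη hC₁ hf₁ x).mul (moll_tendsto η hη hC₂ hf₂ x)).mul
      tendsto_const_nhds
end
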